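/- Let τ be a permutation of a finite set and let a, b, c be three elements lying in three distinct cycles of τ. Then the permutation obtained from τ by pre-composing with the 3-cycle (a b c) has exactly two fewer cycles than τ, the three cycles through a, b, c being merged into one. -/
import Mathlib


/-- The number of cycles (orbits, counting fixed points) of a permutation of a finite set. -/
def numCycles {α : Type*} [Fintype α] [DecidableEq α] (τ : Equiv.Perm α) : ℕ :=
  (Fintype.card α - τ.cycleType.sum) + τ.cycleType.card

section Aux

variable {α : Type*} [Fintype α] [DecidableEq α]

def scSetoid (σ : Equiv.Perm α) : Setoid α :=
  ⟨σ.SameCycle, ⟨Equiv.Perm.SameCycle.refl σ, Equiv.Perm.SameCycle.symm, Equiv.Perm.SameCycle.trans⟩⟩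

instance scDec (σ : Equiv.Perm α) : DecidableEq (Quotient (scSetoid σ)) :=
  fun q₁ q₂ => Quotient.recOnSubsingleton₂ q₁ q₂ fun a b =>
    decidable_of_iff (σ.SameCycle a b) (by rw [Quotient.eq]; rfl)

instance scFin (σ : Equiv.Perm α) : Fintype (Quotient (scSetoid σ)) :=
  @Quotient.fintype α _ (scSetoid σ) (fun x y => (inferInstance : Decidable (σ.SameCycle x y)))

/-- auxiliary encoding of a cycle-class -/
def scEnc (σ : Equiv.Perm α) (x : α) : α ⊕ Equiv.Perm α :=
  if x ∈ σ.support then Sum.inr (σ.cycleOf x) else Sum.inl x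

lemma scEnc_eq_iff (σ : Equiv.Perm α) {x y : α} :
    scEnc σ x = scEnc σ y ↔ σ.SameCycle x y := by
  unfold scEnc
  by_cases hx : x ∈ σ.support <;> by_cases hy : y ∈ σ.support <;>
      simp only [hx, hy, if_pos, if_neg, reduceIte]
  · constructor
    · intro h
      have h' : σ.cycleOf x = σ.cycleOf y := by simpa using h
      have : y ∈ (σ.cycleOf x).support := by
        rw [h']; exact Equiv.Perm.mem_support_cycleOf_iff.2 ⟨Equiv.Perm.SameCycle.refl _ _, hy⟩
      exact (Equiv.Perm.mem_support_cycleOf_iff.1 this).1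
    · intro h; simp [h.cycleOf_eq]
  · simp only [reduceCtorEq, false_iff]
    intro h
    exact hy ((h.symm.mem_support_iff).2 hx)
  · simp only [reduceCtorEq, false_iff]
    intro h
    exact hx ((h.mem_support_iff).2 hy)
  · simp only [Sum.inl.injEq]
    constructor
    · rintro rfl; exact Equiv.Perm.SameCycle.refl _ _
    · intro h
      obtain ⟨i, hi⟩ := h
      rw [Equiv.Perm.notMem_support] at hx
      rw [← hi]
      exact (Equiv.Perm.zpow_apply_eq_self_of_apply_eq_self hx i).symm

def scClassify (σ : Equiv.Perm α) (a : α) : {x // x ∉ σ.support} ⊕ σ.cycleFactorsFinset :=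
  if h : a ∈ σ.support then Sum.inr ⟨σ.cycleOf a, Equiv.Perm.cycleOf_mem_cycleFactorsFinset_iff.2 h⟩
  else Sum.inl ⟨a, h⟩

lemma scClassify_eq_iff (σ : Equiv.Perm α) {x y : α} :
    scClassify σ x = scClassify σ y ↔ σ.SameCycle x y := by
  rw [← scEnc_eq_iff]
  unfold scClassify scEnc
  by_cases hx : x ∈ σ.support <;> by_cases hy : y ∈ σ.support <;>
    simp [hx, hy, Subtype.ext_iff]

lemma card_quotient_eq (σ : Equiv.Perm α) :
    Fintype.card (Quotient (scSetoid σ)) = numCycles σ := by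
  have hwd : ∀ x y : α, (scSetoid σ).r x y → scClassify σ x = scClassify σ y :=
    fun x y h => (scClassify_eq_iff σ).2 h
  set g : Quotient (scSetoid σ) → {x // x ∉ σ.support} ⊕ σ.cycleFactorsFinset :=
    Quotient.lift (scClassify σ) hwd with hg
  have hbij : Function.Bijective g := by
    constructor
    · intro q₁ q₂
      refine Quotient.inductionOn₂ q₁ q₂ fun a b h => ?_
      exact Quotient.sound ((scClassify_eq_iff σ).1 h)
    · rintro (⟨x, hx⟩ | ⟨c, hc⟩)
      · exact ⟨⟦x⟧, by simp [hg, scClassify, hx]⟩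
      · obtain ⟨hc1, hc2⟩ := Equiv.Perm.mem_cycleFactorsFinset_iff.1 hc
        obtain ⟨a, ha⟩ := hc1.nonempty_support
        have ha' : a ∈ σ.support := by
          rw [Equiv.Perm.mem_support] at ha ⊢
          rw [← hc2 a (Equiv.Perm.mem_support.2 ha)]; exact ha
        refine ⟨⟦a⟧, ?_⟩
        simp only [hg, Quotient.lift_mk, scClassify, dif_pos ha']
        congr 1
        exact Subtype.ext (Equiv.Perm.cycle_is_cycleOf ha hc).symm
  have := Fintype.card_of_bijective hbij
  rw [this, Fintype.card_sum, Fintype.card_coe, numCycles, Equiv.Perm.sum_cycleType,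
    Equiv.Perm.cycleType, Multiset.card_map]
  congr 1
  · rw [Fintype.card_subtype_compl, Fintype.card_coe]

lemma mulSwap_apply (σ : Equiv.Perm α) (x y z : α) :
    (σ * Equiv.swap x y) z = σ (Equiv.swap x y z) := rfl

lemma mergeB1 {σ : Equiv.Perm α} {x y : α} (h : ¬σ.SameCycle x y) :
    (σ * Equiv.swap x y).SameCycle x y := by
  set σ' := σ * Equiv.swap x y with hσ'
  have hxy : x ≠ y := fun e => h (e ▸ Equiv.Perm.SameCycle.refl σ x)
  have hex : ∃ n : ℕ, (σ ^ n) (σ y) = y := by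
    refine ⟨orderOf σ - 1, ?_⟩
    have h1 : (σ ^ (orderOf σ - 1)) (σ y) = (σ ^ (orderOf σ - 1) * σ) y := rfl
    rw [h1, ← pow_succ, Nat.sub_add_cancel (Nat.one_le_iff_ne_zero.2 (orderOf_pos σ).ne')]
    rw [pow_orderOf_eq_one]; rfl
  set m := Nat.find hex with hm
  have hmspec : (σ ^ m) (σ y) = y := Nat.find_spec hex
  have key : ∀ k, k ≤ m → (σ' ^ (k + 1)) x = (σ ^ k) (σ y) := by
    intro k
    induction k with
    | zero =>
      intro _
      simp [hσ', mulSwap_apply, Equiv.swap_apply_left]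
    | succ k ih =>
      intro hk
      have hk' : k ≤ m := Nat.le_of_succ_le hk
      have ihk := ih hk'
      set z := (σ ^ k) (σ y) with hz
      have hzy : z ≠ y := by
        intro e
        exact Nat.find_min hex (Nat.lt_of_succ_le hk) e
      have hzc : σ.SameCycle y z := ⟨(k : ℤ) + 1, by
        rw [hz]; rw [zpow_add, zpow_one, zpow_natCast]; rfl⟩
      have hzx : z ≠ x := fun e => h ((e ▸ hzc).symm)
      have hstep : (σ' ^ (k + 1 + 1)) x = σ' ((σ' ^ (k + 1)) x) := by
        rw [pow_succ' σ' (k+1), Equiv.Perm.mul_apply]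
      rw [hstep, ihk, hσ', mulSwap_apply, Equiv.swap_apply_of_ne_of_ne hzx hzy,
        pow_succ' σ k, Equiv.Perm.mul_apply, ← hz]
  refine ⟨((m : ℤ) + 1), ?_⟩
  have := key m le_rfl
  rw [hmspec] at this
  rw [← this]
  have hc : ((m : ℤ) + 1) = ((m + 1 : ℕ) : ℤ) := by push_cast; ring
  rw [hc, zpow_natCast]

lemma mergeB2 {σ : Equiv.Perm α} {x y : α} (h : ¬σ.SameCycle x y) {u v : α}
    (huv : σ.SameCycle u v) : (σ * Equiv.swap x y).SameCycle u v := by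
  set σ' := σ * Equiv.swap x y with hσ'
  obtain ⟨n, -, rfl⟩ := huv.exists_pow_eq'
  clear huv
  induction n with
  | zero => simpa using Equiv.Perm.SameCycle.refl σ' u
  | succ n ih =>
    set z := (σ ^ n) u with hz
    have hstep : (σ ^ (n + 1)) u = σ z := by
      rw [pow_succ' σ n, Equiv.Perm.mul_apply]
    rw [hstep]
    by_cases hzx : z = x
    · have hux : σ'.SameCycle u y := (hzx ▸ ih).trans (mergeB1 h)
      have : σ z = σ' y := by
        rw [hσ', mulSwap_apply, Equiv.swap_apply_right, hzx]
      rw [this]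
      exact Equiv.Perm.sameCycle_apply_right.2 hux
    · by_cases hzy : z = y
      · have hux : σ'.SameCycle u x := (hzy ▸ ih).trans (mergeB1 h).symm
        have : σ z = σ' x := by
          rw [hσ', mulSwap_apply, Equiv.swap_apply_left, hzy]
        rw [this]
        exact Equiv.Perm.sameCycle_apply_right.2 hux
      · have : σ z = σ' z := by
          rw [hσ', mulSwap_apply, Equiv.swap_apply_of_ne_of_ne hzx hzy]
        rw [this]
        exact Equiv.Perm.sameCycle_apply_right.2 ih

lemma mergeB3 {σ : Equiv.Perm α} {x y : α} (h : ¬σ.SameCycle x y) {u v : α}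
    (huv : (σ * Equiv.swap x y).SameCycle u v) :
    σ.SameCycle u v ∨ (σ.SameCycle u x ∧ σ.SameCycle y v) ∨
      (σ.SameCycle u y ∧ σ.SameCycle x v) := by
  set σ' := σ * Equiv.swap x y with hσ'
  obtain ⟨n, -, rfl⟩ := huv.exists_pow_eq'
  clear huv
  induction n with
  | zero => exact Or.inl (Equiv.Perm.SameCycle.refl σ u)
  | succ n ih =>
    set z := (σ' ^ n) u with hz
    have hstep : (σ' ^ (n + 1)) u = σ' z := by
      rw [pow_succ' σ' n, Equiv.Perm.mul_apply]
    rw [hstep]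
    by_cases hzx : z = x
    · have hval : σ' z = σ y := by rw [hσ', mulSwap_apply, hzx, Equiv.swap_apply_left]
      rw [hval]
      rcases hzx ▸ ih with h1 | ⟨h1, h2⟩ | ⟨h1, h2⟩
      · exact Or.inr (Or.inl ⟨h1, Equiv.Perm.sameCycle_apply_right.2 (Equiv.Perm.SameCycle.refl σ y)⟩)
      · exact absurd h2.symm h
      · exact Or.inl (h1.trans (Equiv.Perm.sameCycle_apply_right.2 (Equiv.Perm.SameCycle.refl σ y)))
    · by_cases hzy : z = y
      · have hval : σ' z = σ x := by rw [hσ', mulSwap_apply, hzy, Equiv.swap_apply_right]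
        rw [hval]
        rcases hzy ▸ ih with h1 | ⟨h1, h2⟩ | ⟨h1, h2⟩
        · exact Or.inr (Or.inr ⟨h1, Equiv.Perm.sameCycle_apply_right.2 (Equiv.Perm.SameCycle.refl σ x)⟩)
        · exact Or.inl (h1.trans (Equiv.Perm.sameCycle_apply_right.2 (Equiv.Perm.SameCycle.refl σ x)))
        · exact absurd h2 h
      · have hval : σ' z = σ z := by rw [hσ', mulSwap_apply, Equiv.swap_apply_of_ne_of_ne hzx hzy]
        rw [hval]
        rcases ih with h1 | ⟨h1, h2⟩ | ⟨h1, h2⟩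
        · exact Or.inl (Equiv.Perm.sameCycle_apply_right.2 h1)
        · exact Or.inr (Or.inl ⟨h1, Equiv.Perm.sameCycle_apply_right.2 h2⟩)
        · exact Or.inr (Or.inr ⟨h1, Equiv.Perm.sameCycle_apply_right.2 h2⟩)

lemma merge_numCycles {σ : Equiv.Perm α} {x y : α} (h : ¬σ.SameCycle x y) :
    numCycles (σ * Equiv.swap x y) = numCycles σ - 1 := by
  set σ' := σ * Equiv.swap x y with hσ'
  rw [← card_quotient_eq, ← card_quotient_eq]
  have hwd : ∀ u v : α, (scSetoid σ).r u v → (⟦u⟧ : Quotient (scSetoid σ')) = ⟦v⟧ :=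
    fun u v huv => Quotient.sound (mergeB2 h huv)
  set φ : {q : Quotient (scSetoid σ) // q ≠ ⟦y⟧} → Quotient (scSetoid σ') :=
    fun q => Quotient.lift (fun a => (⟦a⟧ : Quotient (scSetoid σ'))) hwd q.1 with hφ
  have hbij : Function.Bijective φ := by
    constructor
    · rintro ⟨q₁, h1⟩ ⟨q₂, h2⟩ heq
      refine Subtype.ext ?_
      induction q₁ using Quotient.inductionOn with | h a =>
      induction q₂ using Quotient.inductionOn with | h b =>
      have hab : σ'.SameCycle a b := Quotient.exact heq
      rcases mergeB3 h hab with h1' | ⟨h1', h2'⟩ | ⟨h1', h2'⟩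
      · exact Quotient.sound h1'
      · exact absurd (Quotient.sound h2'.symm : (⟦b⟧ : Quotient (scSetoid σ)) = ⟦y⟧) h2
      · exact absurd (Quotient.sound h1' : (⟦a⟧ : Quotient (scSetoid σ)) = ⟦y⟧) h1
    · intro q'
      induction q' using Quotient.inductionOn with | h u =>
      by_cases huy : σ.SameCycle u y
      · refine ⟨⟨⟦x⟧, fun e => h (Quotient.exact e)⟩, ?_⟩
        exact Quotient.sound ((mergeB1 h).trans (mergeB2 h huy.symm))
      · exact ⟨⟨⟦u⟧, fun e => huy (Quotient.exact e)⟩, rfl⟩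
  rw [← Fintype.card_of_bijective hbij]
  rw [Fintype.card_subtype_compl, Fintype.card_subtype_eq]


end Aux

/-- If `a`, `b`, `c` lie in three distinct cycles of a permutation `τ`, then pre-composing
`τ` with the 3-cycle `(a b c)` merges the three cycles through `a`, `b`, `c` into one and
produces a permutation with exactly two fewer cycles. -/
theorem numCycles_mul_three_cycle {α : Type*} [Fintype α] [DecidableEq α]
    (τ : Equiv.Perm α) (a b c : α)
    (hab : a ≠ b) (hac : a ≠ c) (hbc : b ≠ c)
    (hcycab : ¬ τ.SameCycle a b) (hcycac : ¬ τ.SameCycle a c) (hcycbc : ¬ τ.SameCycle b c) :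
    numCycles (τ * (Equiv.swap a c * Equiv.swap a b)) = numCycles τ - 2 ∧
      (τ * (Equiv.swap a c * Equiv.swap a b)).SameCycle a b ∧
      (τ * (Equiv.swap a c * Equiv.swap a b)).SameCycle a c := by
  have hassoc : τ * (Equiv.swap a c * Equiv.swap a b) = (τ * Equiv.swap a c) * Equiv.swap a b :=
    (mul_assoc τ (Equiv.swap a c) (Equiv.swap a b)).symm
  rw [hassoc]
  set σ₁ := τ * Equiv.swap a c with hσ₁
  have hσ₁ac : σ₁.SameCycle a c := mergeB1 hcycac
  have hσ₁n : numCycles σ₁ = numCycles τ - 1 := merge_numCycles hcycac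
  have hσ₁ab : ¬σ₁.SameCycle a b := by
    intro hh
    rcases mergeB3 hcycac hh with h1 | ⟨h1, h2⟩ | ⟨h1, h2⟩
    · exact hcycab h1
    · exact hcycbc h2.symm
    · exact hcycac h1
  refine ⟨?_, mergeB1 hσ₁ab, mergeB2 hσ₁ab hσ₁ac⟩
  rw [merge_numCycles hσ₁ab, hσ₁n, Nat.sub_sub]
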